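/- arXiv:1904.10454 — 2 statements merged into one kernel-verified Lean document; each statement's English description precedes it below -/
import Mathlib

section
/- Let V be a finite set, let G, Δ be subgroups of Sym(V) such that every element of Δ normalizes G, and let f ∈ Sym(V). Say that π ∈ Sym(V ⊕ V) preserves the matching M_f if for every v ∈ V there exists w ∈ V with π(inl(f v)) = inl(f w) and π(inr v) = inr w. Then for every δ ∈ Sym(V) the following are equivalent: (1) there exists π ∈ Δ_U preserving M_f with π(inr v) = inr(δ v) for all v ∈ V; (2) δ ∈ Δ and δ⁻¹(Gf)δ = Gf. In other words, the restriction to the second copy of V of the stabilizer of M_f inside Δ_U equals Norm_Δ(Gf). -/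
/-- The restriction to the second copy of `V` of the stabilizer of the matching
`M_f` inside `Δ_U` is exactly the normalizer `Norm_Δ(Gf)` of the coset `Gf` in `Δ`. -/
theorem matching_stabilizer_eq_coset_normalizer {V : Type*} [Fintype V]
    (G Δ : Subgroup (Equiv.Perm V)) (f : Equiv.Perm V)
    (hnorm : ∀ δ ∈ Δ,
      (fun x => δ⁻¹ * x * δ) '' (G : Set (Equiv.Perm V)) = (G : Set (Equiv.Perm V))) :
    ∀ δ : Equiv.Perm V,
      (∃ π : Equiv.Perm (V ⊕ V),
        (∃ g ∈ G, ∃ δ' ∈ Δ,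
          (∀ v : V, π (Sum.inl v) = Sum.inl (δ' (g v))) ∧
          (∀ v : V, π (Sum.inr v) = Sum.inr (δ' v))) ∧
        (∀ v : V, ∃ w : V,
          π (Sum.inl (f v)) = Sum.inl (f w) ∧ π (Sum.inr v) = Sum.inr w) ∧
        (∀ v : V, π (Sum.inr v) = Sum.inr (δ v)))
      ↔ (δ ∈ Δ ∧
          (fun x => δ⁻¹ * x * δ) '' {x | ∃ g ∈ G, x = g * f} =
            {x | ∃ g ∈ G, x = g * f}) := by
  intro δ
  constructor
  · rintro ⟨π, ⟨g, hg, δ', hδ', hl, hr⟩, hM, hδ⟩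
    have hδ'δ : δ' = δ := by
      ext v
      exact Sum.inr.inj ((hr v).symm.trans (hδ v))
    rw [hδ'δ] at hl hr
    replace hδ' : δ ∈ Δ := hδ'δ ▸ hδ'
    refine ⟨hδ', ?_⟩
    have key : ∀ v, δ (g (f v)) = f (δ v) := by
      intro v
      obtain ⟨w, h1, h2⟩ := hM v
      have hw : δ v = w := Sum.inr.inj ((hr v).symm.trans h2)
      have := (hl (f v)).symm.trans h1
      rw [hw]
      exact Sum.inl.inj this
    have keyp : δ * g * f = f * δ := by
      ext v
      simpa [Equiv.Perm.mul_apply] using key v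
    have keyf : δ⁻¹ * f * δ = g * f := by
      calc δ⁻¹ * f * δ = δ⁻¹ * (f * δ) := by group
        _ = δ⁻¹ * (δ * g * f) := by rw [keyp]
        _ = g * f := by group
    have hconj : ∀ h ∈ G, δ⁻¹ * h * δ ∈ G := by
      intro h hh
      have h2 := hnorm δ hδ'
      have : δ⁻¹ * h * δ ∈ (G : Set (Equiv.Perm V)) := by
        rw [← h2]; exact ⟨h, hh, rfl⟩
      exact this
    have hconj' : ∀ h ∈ G, δ * h * δ⁻¹ ∈ G := by
      intro h hh
      have h2 := hnorm δ hδ'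
      have hmem : h ∈ (fun x => δ⁻¹ * x * δ) '' (G : Set (Equiv.Perm V)) := by
        rw [h2]; exact hh
      obtain ⟨h', hh', he⟩ := hmem
      have : δ * h * δ⁻¹ = h' := by rw [← he]; group
      rw [this]; exact hh'
    ext x
    simp only [Set.mem_image, Set.mem_setOf_eq]
    constructor
    · rintro ⟨y, ⟨h, hh, rfl⟩, rfl⟩
      refine ⟨(δ⁻¹ * h * δ) * g, G.mul_mem (hconj h hh) hg, ?_⟩
      calc δ⁻¹ * (h * f) * δ = (δ⁻¹ * h * δ) * (δ⁻¹ * f * δ) := by group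
        _ = (δ⁻¹ * h * δ) * (g * f) := by rw [keyf]
        _ = ((δ⁻¹ * h * δ) * g) * f := by group
    · rintro ⟨h, hh, rfl⟩
      refine ⟨(δ * h * δ⁻¹) * (δ * g⁻¹ * δ⁻¹) * f,
        ⟨(δ * h * δ⁻¹) * (δ * g⁻¹ * δ⁻¹),
          G.mul_mem (hconj' h hh) (hconj' g⁻¹ (G.inv_mem hg)), rfl⟩, ?_⟩
      have hfd : f = δ * (g * f) * δ⁻¹ := by rw [← keyf]; group
      calc δ⁻¹ * ((δ * h * δ⁻¹) * (δ * g⁻¹ * δ⁻¹) * f) * δ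
          = h * (g⁻¹ * (δ⁻¹ * f * δ)) := by group
        _ = h * (g⁻¹ * (g * f)) := by rw [keyf]
        _ = h * f := by group
  · rintro ⟨hδ, hset⟩
    have hmem : δ⁻¹ * f * δ ∈ {x | ∃ g ∈ G, x = g * f} := by
      rw [← hset]
      exact ⟨f, ⟨1, G.one_mem, by group⟩, rfl⟩
    obtain ⟨g, hg, heq⟩ := hmem
    refine ⟨Equiv.sumCongr ((g : Equiv.Perm V).trans δ) δ,
      ⟨g, hg, δ, hδ, fun v => rfl, fun v => rfl⟩, ?_, fun v => rfl⟩
    intro v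
    refine ⟨δ v, ?_, rfl⟩
    have keyp : δ * g * f = f * δ := by
      calc δ * g * f = δ * (g * f) := by group
        _ = δ * (δ⁻¹ * f * δ) := by rw [heq]
        _ = f * δ := by group
    have := congrArg (fun p : Equiv.Perm V => p v) keyp
    simp only [Equiv.Perm.mul_apply] at this
    simp [Equiv.sumCongr_apply, this]
end

section
/- Let R : ℕ → ℕ → ℕ satisfy: (i) R(m, n) ≤ 1 whenever n ≤ 1; and (ii) for all m ≥ 1 and n ≥ 2, either there exist n₁ ≥ 1 and n₂ ≥ 1 with n₁ + n₂ = n and R(m, n) ≤ 1 + R(m, n₁) + R(m, n₂), or m = n and R(m, n) ≤ 1 + 2^n · R(⌈n/2⌉, n). Then R(m, n) ≤ 2^(6m) · n² for all m ≥ 1 and n ≥ 1. -/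
/-- The recurrence bound for the number of recursive calls of the
group-canonization algorithm: `R(m, n) ≤ 2^(6m) · n²`. -/
theorem recursion_bound (R : ℕ → ℕ → ℕ)
    (h1 : ∀ m n, n ≤ 1 → R m n ≤ 1)
    (h2 : ∀ m n, 1 ≤ m → 2 ≤ n →
      (∃ n₁ n₂, 1 ≤ n₁ ∧ 1 ≤ n₂ ∧ n₁ + n₂ = n ∧ R m n ≤ 1 + R m n₁ + R m n₂) ∨
      (m = n ∧ R m n ≤ 1 + 2 ^ n * R ((n + 1) / 2) n)) :
    ∀ m n, 1 ≤ m → 1 ≤ n → R m n ≤ 2 ^ (6 * m) * n ^ 2 := by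
  intro m
  induction m using Nat.strong_induction_on with
  | _ m ihm =>
  intro n
  induction n using Nat.strong_induction_on with
  | _ n ihn =>
  intro hm hn
  have hpow : 1 ≤ 2 ^ (6 * m) := Nat.one_le_two_pow
  by_cases hn1 : n ≤ 1
  · calc R m n ≤ 1 := h1 m n hn1
      _ ≤ 2 ^ (6 * m) * n ^ 2 := by nlinarith
  · have hn2 : 2 ≤ n := by omega
    rcases h2 m n hm hn2 with ⟨n₁, n₂, h₁, h₂, hsum, hR⟩ | ⟨heq, hR⟩
    · have i1 : R m n₁ ≤ 2 ^ (6 * m) * n₁ ^ 2 := ihn n₁ (by omega) hm h₁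
      have i2 : R m n₂ ≤ 2 ^ (6 * m) * n₂ ^ 2 := ihn n₂ (by omega) hm h₂
      have : n ^ 2 = n₁ ^ 2 + 2 * n₁ * n₂ + n₂ ^ 2 := by
        subst hsum; ring
      have key : 1 ≤ 2 ^ (6 * m) * (2 * n₁ * n₂) := Nat.one_le_iff_ne_zero.mpr (by positivity)
      nlinarith [key]
    · subst heq
      have hc : (m + 1) / 2 < m := by omega
      have hc1 : 1 ≤ (m + 1) / 2 := by omega
      have ih : R ((m + 1) / 2) m ≤ 2 ^ (6 * ((m + 1) / 2)) * m ^ 2 :=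
        ihm _ hc m hc1 hn
      have hexp : 6 * ((m + 1) / 2) ≤ 3 * m + 3 := by omega
      calc R m m ≤ 1 + 2 ^ m * (2 ^ (6 * ((m + 1) / 2)) * m ^ 2) := by
            refine hR.trans ?_
            gcongr
        _ ≤ 1 + 2 ^ (4 * m + 3) * m ^ 2 := by
            rw [← mul_assoc, ← pow_add]
            gcongr 1 + 2 ^ ?_ * m ^ 2
            · omega
            · omega
        _ ≤ 2 ^ (6 * m) * m ^ 2 := by
            have h4 : 2 ^ (4 * m + 4) ≤ 2 ^ (6 * m) := by
              apply Nat.pow_le_pow_right (by omega); omega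
            have h5 : 1 ≤ 2 ^ (4 * m + 3) * m ^ 2 := Nat.one_le_iff_ne_zero.mpr (by positivity)
            have h6 : 2 ^ (4 * m + 4) = 2 * 2 ^ (4 * m + 3) := by ring
            nlinarith
end
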